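/- Let r be even with d+1 ≤ r ≤ 2d, and define f(x) = x_1 + 2x_2 + … + (r/2 − 1)x_{r/2−1} mod (r/2) for x ∈ (Z/n)^d (n divisible by r/2 if needed; assume r/2 divides n), and S = {x : f(x) ∈ {1, 2, …, r−d}}. Then in the torus T_n^d, every vertex of S has exactly r neighbors in S, and every vertex not in S has exactly 2(r−d) neighbors in S. -/

import Mathlib

/-- The `d`-dimensional torus `T_n^d` on vertex set `(ZMod n)^d`: adjacency is differing
by `±1 (mod n)` in exactly one coordinate. -/
def torus (n d : ℕ) : SimpleGraph (Fin d → ZMod n) :=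
  SimpleGraph.fromRel fun x y =>
    ∃ i, (y i = x i + 1 ∨ y i = x i - 1) ∧ ∀ j, j ≠ i → y j = x j

/-- The functional `f(x) = x_1 + 2 x_2 + ⋯ + (r/2 - 1) x_{r/2-1} mod (r/2)` (coordinates
indexed from 1; the coordinate with 1-based index `i + 1` gets coefficient `i + 1` when
`i + 1 ≤ r/2 - 1`, and coefficient `0` otherwise), well-defined since `r/2 ∣ n`. -/
def fEven (n d r : ℕ) (h : r / 2 ∣ n) (x : Fin d → ZMod n) : ZMod (r / 2) :=
  ∑ i : Fin d, if (i : ℕ) + 1 ≤ r / 2 - 1 then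
    (((i : ℕ) + 1 : ℕ) : ZMod (r / 2)) * ZMod.castHom h (ZMod (r / 2)) (x i) else 0


open Finset

-- filter of small indices in Fin d
lemma filter_small_card {m d : ℕ} (hm : 1 ≤ m) (hmd : m ≤ d) :
    (Finset.univ.filter (fun i : Fin d => (i : ℕ) + 1 ≤ m - 1)).card = m - 1 := by
  rw [Finset.card_filter, Fin.sum_univ_eq_sum_range (fun k => if k + 1 ≤ m - 1 then 1 else 0),
    ← Finset.card_filter]
  have : (Finset.range d).filter (fun k => k + 1 ≤ m - 1) = Finset.range (m - 1) := by
    ext a; simp only [Finset.mem_filter, Finset.mem_range]; omega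
  rw [this, Finset.card_range]

lemma fEven_update (n d r : ℕ) (h : r / 2 ∣ n) (x : Fin d → ZMod n) (i : Fin d) (v : ZMod n) :
    fEven n d r h (Function.update x i v) = fEven n d r h x +
      (if (i : ℕ) + 1 ≤ r / 2 - 1 then (((i : ℕ) + 1 : ℕ) : ZMod (r / 2)) else 0) *
        (ZMod.castHom h (ZMod (r / 2)) v - ZMod.castHom h (ZMod (r / 2)) (x i)) := by
  set g : Fin d → ZMod n → ZMod (r / 2) := fun j z =>
    if (j : ℕ) + 1 ≤ r / 2 - 1 then (((j : ℕ) + 1 : ℕ) : ZMod (r / 2)) * ZMod.castHom h (ZMod (r / 2)) z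
    else 0 with hg
  have h1 : (fun j => g j (Function.update x i v j)) =
      Function.update (fun j => g j (x j)) i (g i v) := by
    funext j
    by_cases hj : j = i
    · subst hj; simp [Function.update_self]
    · simp [Function.update_of_ne hj]
  have h2 : fEven n d r h (Function.update x i v) = ∑ j : Fin d, g j (Function.update x i v j) := rfl
  have h3 : fEven n d r h x = ∑ j : Fin d, g j (x j) := rfl
  rw [h2, h3]
  calc ∑ j : Fin d, g j (Function.update x i v j)
      = ∑ j : Fin d, Function.update (fun j => g j (x j)) i (g i v) j := by rw [h1]
    _ = g i v + ∑ j ∈ Finset.univ \ {i}, g j (x j) :=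
        Finset.sum_update_of_mem (Finset.mem_univ i) _ _
    _ = (g i (x i) + ∑ j ∈ Finset.univ \ {i}, g j (x j)) + (g i v - g i (x i)) := by ring
    _ = (∑ j : Fin d, g j (x j)) + (g i v - g i (x i)) := by
        rw [← Finset.sum_update_of_mem (Finset.mem_univ i) (fun j => g j (x j)) (g i (x i))]
        congr 1
        apply Finset.sum_congr rfl
        intro j _
        by_cases hj : j = i
        · subst hj; simp
        · simp [Function.update_of_ne hj]
    _ = _ := by
        congr 1
        by_cases hs : (i : ℕ) + 1 ≤ r / 2 - 1
        · simp only [hg, if_pos hs]; ring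
        · simp only [hg, if_neg hs]; ring
lemma count_small {m d : ℕ} [NeZero m] (hmd : m ≤ d) (hd : 1 ≤ d)
    (c ε : ZMod m) (hε : ε * ε = 1) (A : Finset (ZMod m)) :
    (Finset.univ.filter (fun i : Fin d =>
        (i : ℕ) + 1 ≤ m - 1 ∧ c + (((i : ℕ) + 1 : ℕ) : ZMod m) * ε ∈ A)).card
      = (A.erase c).card := by
  have hm : 1 ≤ m := Nat.one_le_iff_ne_zero.2 (NeZero.ne m)
  have hcancel : ∀ z : ZMod m, z * ε * ε = z := by
    intro z; rw [mul_assoc, hε, mul_one]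
  apply Finset.card_nbij' (fun i : Fin d => c + (((i : ℕ) + 1 : ℕ) : ZMod m) * ε)
    (fun a : ZMod m => (⟨((a - c) * ε).val - 1, by
      have := ZMod.val_lt ((a - c) * ε); omega⟩ : Fin d))
  · intro i hi
    simp only [Finset.coe_filter, Finset.mem_coe, Set.mem_setOf_eq, Finset.mem_filter, Finset.mem_univ, true_and] at hi
    obtain ⟨hsmall, hmem⟩ := hi
    refine Finset.mem_erase.2 ⟨?_, hmem⟩
    intro hcontra
    have h0 : (((i : ℕ) + 1 : ℕ) : ZMod m) * ε = 0 := by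
      have := add_eq_left.mp hcontra
      exact this
    have h1 : (((i : ℕ) + 1 : ℕ) : ZMod m) = 0 := by
      have h2 := congrArg (· * ε) h0
      simpa [hcancel] using h2
    have h2 : (((i : ℕ) + 1 : ℕ) : ZMod m).val = (i : ℕ) + 1 :=
      ZMod.val_cast_of_lt (by omega)
    rw [h1, ZMod.val_zero] at h2
    omega
  · intro a ha
    obtain ⟨hne, hmem⟩ := Finset.mem_erase.1 ha
    have hsub : a - c ≠ 0 := sub_ne_zero.2 hne
    have hval0 : ((a - c) * ε).val ≠ 0 := by
      rw [Ne, ZMod.val_eq_zero]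
      intro h0
      apply hsub
      have h2 := congrArg (· * ε) h0
      simpa [hcancel] using h2
    have hvlt : ((a - c) * ε).val < m := ZMod.val_lt _
    have hkey : ((((a - c) * ε).val - 1 + 1 : ℕ) : ZMod m) * ε = a - c := by
      rw [Nat.sub_add_cancel (by omega), ZMod.natCast_rightInverse ((a - c) * ε), hcancel]
    simp only [Finset.coe_filter, Finset.mem_coe, Set.mem_setOf_eq, Finset.mem_filter, Finset.mem_univ, true_and]
    refine ⟨by omega, ?_⟩
    show c + ((((a - c) * ε).val - 1 + 1 : ℕ) : ZMod m) * ε ∈ A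
    rw [hkey]
    simpa using hmem
  · intro i hi
    simp only [Finset.coe_filter, Finset.mem_coe, Set.mem_setOf_eq, Finset.mem_filter, Finset.mem_univ, true_and] at hi
    obtain ⟨hsmall, _⟩ := hi
    have h1 : c + (((i : ℕ) + 1 : ℕ) : ZMod m) * ε - c = (((i : ℕ) + 1 : ℕ) : ZMod m) * ε := by
      ring
    apply Fin.ext
    show (((c + (((i : ℕ) + 1 : ℕ) : ZMod m) * ε - c) * ε).val) - 1 = (i : ℕ)
    rw [h1, hcancel, ZMod.val_cast_of_lt (by omega)]
    omega
  · intro a ha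
    obtain ⟨hne, hmem⟩ := Finset.mem_erase.1 ha
    have hsub : a - c ≠ 0 := sub_ne_zero.2 hne
    have hval0 : ((a - c) * ε).val ≠ 0 := by
      rw [Ne, ZMod.val_eq_zero]
      intro h0
      apply hsub
      have h2 := congrArg (· * ε) h0
      simpa [hcancel] using h2
    show c + ((((a - c) * ε).val - 1 + 1 : ℕ) : ZMod m) * ε = a
    rw [Nat.sub_add_cancel (by omega), ZMod.natCast_rightInverse ((a - c) * ε), hcancel]
    ring
lemma ncard_setOf {α : Type*} [Fintype α] (P : α → Prop) [DecidablePred P] :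
    {a | P a}.ncard = (Finset.univ.filter P).card := by
  rw [← Set.ncard_coe_finset]
  congr 1
  ext a
  simp

lemma count_sign {m d : ℕ} [NeZero m] (hmd : m ≤ d) (hd : 1 ≤ d)
    (c ε : ZMod m) (hε : ε * ε = 1) (A : Finset (ZMod m)) :
    (Finset.univ.filter (fun i : Fin d =>
        c + (if (i : ℕ) + 1 ≤ m - 1 then (((i : ℕ) + 1 : ℕ) : ZMod m) else 0) * ε ∈ A)).card
      = (A.erase c).card + (if c ∈ A then d - (m - 1) else 0) := by
  classical
  have hm : 1 ≤ m := Nat.one_le_iff_ne_zero.2 (NeZero.ne m)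
  rw [Finset.card_filter]
  have hsplit : ∀ i : Fin d,
      (if c + (if (i : ℕ) + 1 ≤ m - 1 then (((i : ℕ) + 1 : ℕ) : ZMod m) else 0) * ε ∈ A
        then (1 : ℕ) else 0)
      = (if ((i : ℕ) + 1 ≤ m - 1 ∧ c + (((i : ℕ) + 1 : ℕ) : ZMod m) * ε ∈ A) then 1 else 0)
        + (if (¬ ((i : ℕ) + 1 ≤ m - 1) ∧ c ∈ A) then 1 else 0) := by
    intro i
    by_cases hs : (i : ℕ) + 1 ≤ m - 1 <;> simp [hs]
  rw [Finset.sum_congr rfl (fun i _ => hsplit i), Finset.sum_add_distrib,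
    ← Finset.card_filter, ← Finset.card_filter, count_small hmd hd c ε hε A]
  congr 1
  by_cases hc : c ∈ A
  · rw [if_pos hc]
    have he : (Finset.univ.filter (fun i : Fin d => ¬ ((i : ℕ) + 1 ≤ m - 1) ∧ c ∈ A))
        = Finset.univ.filter (fun i : Fin d => ¬ ((i : ℕ) + 1 ≤ m - 1)) := by
      apply Finset.filter_congr
      intro i _
      simp [hc]
    rw [he]
    have h2 := Finset.card_filter_add_card_filter_not
      (s := (Finset.univ : Finset (Fin d))) (p := fun i : Fin d => (i : ℕ) + 1 ≤ m - 1)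
    rw [filter_small_card hm hmd] at h2
    have h3 : (Finset.univ : Finset (Fin d)).card = d := by simp
    omega
  · rw [if_neg hc]
    simp [hc]
theorem stmt_14 (n d r : ℕ) (hn : 3 ≤ n) (hrEven : Even r)
    (hrd : d + 1 ≤ r) (hr2d : r ≤ 2 * d) (h : r / 2 ∣ n) :
    ∀ S : Set (Fin d → ZMod n),
      S = {x | ∃ m : ℕ, 1 ≤ m ∧ m ≤ r - d ∧ fEven n d r h x = (m : ZMod (r / 2))} →
      (∀ x ∈ S, ((torus n d).neighborSet x ∩ S).ncard = r) ∧
        (∀ x ∉ S, ((torus n d).neighborSet x ∩ S).ncard = 2 * (r - d)) := by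
  classical
  intro S hS
  have h2m : r = 2 * (r / 2) := by
    have h2 := hrEven.two_dvd
    omega
  have hm1 : 1 ≤ r / 2 := by omega
  have hmd : r / 2 ≤ d := by omega
  have hd1 : 1 ≤ d := by omega
  haveI : NeZero (r / 2) := ⟨by omega⟩
  haveI : Fact (1 < n) := ⟨by omega⟩
  have hrd1 : 1 ≤ r - d := by omega
  have hrdm : r - d ≤ r / 2 := by omega
  set A : Finset (ZMod (r / 2)) := (Finset.Icc 1 (r - d)).image (Nat.cast) with hA
  have hmemA : ∀ z : ZMod (r / 2),
      ((∃ k : ℕ, 1 ≤ k ∧ k ≤ r - d ∧ z = (k : ZMod (r / 2))) ↔ z ∈ A) := by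
    intro z
    simp only [hA, Finset.mem_image, Finset.mem_Icc]
    constructor
    · rintro ⟨k, h1, h2, h3⟩; exact ⟨k, ⟨h1, h2⟩, h3.symm⟩
    · rintro ⟨k, ⟨h1, h2⟩, h3⟩; exact ⟨k, h1, h2, h3.symm⟩
  have hScharS : ∀ y : Fin d → ZMod n, (y ∈ S ↔ fEven n d r h y ∈ A) := by
    intro y
    rw [hS]
    simp only [Set.mem_setOf_eq]
    exact hmemA _
  have hcardA : A.card = r - d := by
    rw [hA, Finset.card_image_of_injOn, Nat.card_Icc]
    · omega
    · intro a ha b hb hab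
      simp only [Finset.coe_Icc, Set.mem_Icc] at ha hb
      have hv : (a : ZMod (r / 2)).val = (b : ZMod (r / 2)).val := by rw [hab]
      rw [ZMod.val_natCast, ZMod.val_natCast] at hv
      rcases le_total a b with hab' | hab'
      · have hdvd : r / 2 ∣ b - a := (Nat.modEq_iff_dvd' hab').1 hv
        have := Nat.eq_zero_of_dvd_of_lt hdvd
        omega
      · have hdvd : r / 2 ∣ a - b := (Nat.modEq_iff_dvd' hab').1 hv.symm
        have := Nat.eq_zero_of_dvd_of_lt hdvd
        omega
  -- the key counting result for every vertex
  have key : ∀ x : Fin d → ZMod n,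
      ((torus n d).neighborSet x ∩ S).ncard =
        2 * ((A.erase (fEven n d r h x)).card +
          (if fEven n d r h x ∈ A then d - (r / 2 - 1) else 0)) := by
    intro x
    set eN : Bool → ZMod n := fun b => if b then 1 else -1 with heN
    set e : Fin d × Bool → (Fin d → ZMod n) :=
      fun p => Function.update x p.1 (x p.1 + eN p.2) with he
    have h1ne : (1 : ZMod n) ≠ -1 := by
      intro h12
      have h2 : ((2 : ℕ) : ZMod n) = 0 := by
        push_cast
        have := eq_neg_iff_add_eq_zero.mp h12
        linear_combination this
      rw [ZMod.natCast_eq_zero_iff] at h2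
      have := Nat.le_of_dvd (by norm_num) h2
      omega
    have heN0 : ∀ b, eN b ≠ 0 := by
      intro b
      cases b <;> simp [heN]
    have hinj : Function.Injective e := by
      rintro ⟨i, b⟩ ⟨i', b'⟩ hpq
      have hii : i = i' := by
        by_contra hne
        have h1 := congrFun hpq i
        simp only [he] at h1
        rw [Function.update_self, Function.update_of_ne hne] at h1
        exact heN0 b (add_eq_left.mp h1)
      subst hii
      have h1 := congrFun hpq i
      simp only [he] at h1
      rw [Function.update_self, Function.update_self] at h1
      have h2 : eN b = eN b' := add_left_cancel h1
      have hb : b = b' := by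
        cases b <;> cases b' <;> simp only [heN] at h2 <;> first
          | rfl
          | exact absurd h2.symm h1ne
          | exact absurd h2 h1ne
      rw [hb]
    have hrange : (torus n d).neighborSet x = Set.range e := by
      ext y
      simp only [SimpleGraph.mem_neighborSet, torus, SimpleGraph.fromRel_adj, Set.mem_range]
      constructor
      · rintro ⟨hne, hrel⟩
        have hex : ∃ i, (y i = x i + 1 ∨ y i = x i - 1) ∧ ∀ j, j ≠ i → y j = x j := by
          rcases hrel with ⟨i, hcs, hrest⟩ | ⟨i, hcs, hrest⟩
          · exact ⟨i, hcs, hrest⟩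
          · refine ⟨i, ?_, fun j hj => (hrest j hj).symm⟩
            rcases hcs with hcs | hcs
            · right; rw [hcs]; ring
            · left; rw [hcs]; ring
        obtain ⟨i, hcs, hrest⟩ := hex
        rcases hcs with hcs | hcs
        · refine ⟨(i, true), ?_⟩
          funext j
          by_cases hj : j = i
          · subst hj
            simp only [he, heN]
            rw [Function.update_self]
            rw [hcs]
            simp
          · simp only [he]
            rw [Function.update_of_ne hj]
            exact (hrest j hj).symm
        · refine ⟨(i, false), ?_⟩
          funext j
          by_cases hj : j = i
          · subst hj
            simp only [he, heN]
            rw [Function.update_self]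
            rw [hcs]
            simp [sub_eq_add_neg]
          · simp only [he]
            rw [Function.update_of_ne hj]
            exact (hrest j hj).symm
      · rintro ⟨⟨i, b⟩, rfl⟩
        constructor
        · intro heq
          have h1 := congrFun heq i
          simp only [he] at h1
          rw [Function.update_self] at h1
          exact heN0 b (by
            have := left_eq_add.mp h1
            exact this)
        · left
          refine ⟨i, ?_, fun j hj => Function.update_of_ne hj _ x⟩
          cases b
          · right
            simp only [he, heN]
            rw [Function.update_self]
            simp [sub_eq_add_neg]
          · left
            simp only [he, heN]
            rw [Function.update_self]
            simp
    have hfe : ∀ (i : Fin d) (b : Bool), fEven n d r h (e (i, b)) =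
        fEven n d r h x +
          (if (i : ℕ) + 1 ≤ r / 2 - 1 then (((i : ℕ) + 1 : ℕ) : ZMod (r / 2)) else 0) *
            (if b then (1 : ZMod (r / 2)) else -1) := by
      intro i b
      have h1 : e (i, b) = Function.update x i (x i + eN b) := rfl
      rw [h1, fEven_update]
      congr 1
      congr 1
      cases b <;>
        simp only [heN, Bool.false_eq_true, if_true, if_false, map_add, map_neg, map_one,
          reduceIte] <;>
        ring
    calc ((torus n d).neighborSet x ∩ S).ncard
        = (e '' (e ⁻¹' S)).ncard := by
          rw [hrange, Set.inter_comm, Set.image_preimage_eq_inter_range]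
      _ = (e ⁻¹' S).ncard := Set.ncard_image_of_injective _ hinj
      _ = {p : Fin d × Bool | fEven n d r h (e p) ∈ A}.ncard := by
          congr 1
          ext p
          simp only [Set.mem_preimage, Set.mem_setOf_eq]
          exact hScharS (e p)
      _ = (Finset.univ.filter
            (fun p : Fin d × Bool => fEven n d r h (e p) ∈ A)).card := ncard_setOf _
      _ = ∑ p : Fin d × Bool, (if fEven n d r h (e p) ∈ A then 1 else 0) := Finset.card_filter _ _
      _ = ∑ b : Bool, ∑ i : Fin d, (if fEven n d r h (e (i, b)) ∈ A then 1 else 0) := by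
          rw [Fintype.sum_prod_type]
          exact Finset.sum_comm
      _ = ∑ b : Bool, ((A.erase (fEven n d r h x)).card +
            (if fEven n d r h x ∈ A then d - (r / 2 - 1) else 0)) := by
          apply Finset.sum_congr rfl
          intro b _
          have hε : (if b then (1 : ZMod (r / 2)) else -1) * (if b then (1 : ZMod (r / 2)) else -1)
              = 1 := by
            cases b <;> simp
          have := count_sign (m := r / 2) (d := d) hmd hd1 (fEven n d r h x)
            (if b then (1 : ZMod (r / 2)) else -1) hε A
          rw [← this, Finset.card_filter]
          apply Finset.sum_congr rfl
          intro i _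
          rw [hfe i b]
      _ = 2 * ((A.erase (fEven n d r h x)).card +
            (if fEven n d r h x ∈ A then d - (r / 2 - 1) else 0)) := by
          rw [Fintype.sum_bool]
          ring
  constructor
  · intro x hx
    have hc : fEven n d r h x ∈ A := (hScharS x).1 hx
    rw [key x, Finset.card_erase_of_mem hc, hcardA, if_pos hc]
    omega
  · intro x hx
    have hc : fEven n d r h x ∉ A := fun hcc => hx ((hScharS x).2 hcc)
    rw [key x, Finset.erase_eq_of_notMem hc, hcardA, if_neg hc]
    omega
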